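/- Let c ≥ 0 and 0 < s ≤ r, let h : [s,r] → ℝ be a positive differentiable function and n : [s,r] → ℝ a continuous function such that |h'(t)/h(t) − (2 + 2n(t))/t| ≤ c·t for all t ∈ [s,r]. Then |log(h(r)/h(s)) − 2 log(r/s) − 2∫_s^r n(t)/t dt| ≤ c(r²−s²)/2; equivalently, h(r) = e^{O(r²−s²)} (r/s)² exp(2∫_s^r n(t)/t dt) h(s). (This is the abstract content of Proposition 4.5 of the paper.) -/

import Mathlib

open intervalIntegral

set_option maxHeartbeats 1000000 in
/-- If `h > 0` is differentiable on `[s,r]` with `|h'(t)/h(t) − (2 + 2n(t))/t| ≤ c·t`, then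
`|log(h(r)/h(s)) − 2 log(r/s) − 2∫_s^r n(t)/t dt| ≤ c(r²−s²)/2`. -/
theorem h_integral_formula (c s r : ℝ) (hc : 0 ≤ c) (hs : 0 < s) (hsr : s ≤ r)
    (h h' n : ℝ → ℝ)
    (hpos : ∀ t ∈ Set.Icc s r, 0 < h t)
    (hderiv : ∀ t ∈ Set.Icc s r, HasDerivAt h (h' t) t)
    (hncont : ContinuousOn n (Set.Icc s r))
    (hineq : ∀ t ∈ Set.Icc s r, |h' t / h t - (2 + 2 * n t) / t| ≤ c * t) :
    |Real.log (h r / h s) - 2 * Real.log (r / s) - 2 * ∫ t in s..r, n t / t| ≤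
      c * (r ^ 2 - s ^ 2) / 2 := by
  have huIcc : Set.uIcc s r = Set.Icc s r := Set.uIcc_of_le hsr
  have huIoc : Set.uIoc s r = Set.Ioc s r := Set.uIoc_of_le hsr
  have hIocsub : Set.Ioc s r ⊆ Set.Icc s r := Set.Ioc_subset_Icc_self
  -- t ≠ 0 on Icc
  have hne0 : ∀ t ∈ Set.Icc s r, t ≠ 0 := fun t ht => (lt_of_lt_of_le hs ht.1).ne'
  -- φ = h'/h ; ψ = (2 + 2n)/t
  set φ : ℝ → ℝ := fun t => h' t / h t with hφ
  set ψ : ℝ → ℝ := fun t => (2 + 2 * n t) / t with hψ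
  have hψcont : ContinuousOn ψ (Set.Icc s r) := by
    apply ContinuousOn.div
    · exact (continuousOn_const.add (continuousOn_const.mul hncont))
    · exact continuousOn_id
    · exact hne0
  have hψint : IntervalIntegrable ψ MeasureTheory.volume s r :=
    (hψcont.mono (by rw [huIcc])).intervalIntegrable
  -- measurability of φ on Ioc
  have hφmeas : MeasureTheory.AEStronglyMeasurable φ
      (MeasureTheory.volume.restrict (Set.Ioc s r)) := by
    have h1 : MeasureTheory.AEStronglyMeasurable (deriv h)
        (MeasureTheory.volume.restrict (Set.Ioc s r)) :=
      (measurable_deriv h).aestronglyMeasurable.restrict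
    have h2 : ContinuousOn h (Set.Icc s r) := fun t ht =>
      (hderiv t ht).continuousAt.continuousWithinAt
    have h3 : MeasureTheory.AEStronglyMeasurable h
        (MeasureTheory.volume.restrict (Set.Ioc s r)) :=
      (h2.mono hIocsub).aestronglyMeasurable measurableSet_Ioc
    have : MeasureTheory.AEStronglyMeasurable (fun t => deriv h t / h t)
        (MeasureTheory.volume.restrict (Set.Ioc s r)) := (h1.aemeasurable.div h3.aemeasurable).aestronglyMeasurable
    refine this.congr ?_
    refine (MeasureTheory.ae_restrict_iff' measurableSet_Ioc).2 (Filter.Eventually.of_forall ?_)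
    intro t ht
    simp only [hφ, (hderiv t (hIocsub ht)).deriv]
  -- g = φ - ψ is bounded by c*t hence integrable
  have hgbound : ∀ t ∈ Set.Icc s r, |φ t - ψ t| ≤ c * t := hineq
  have hgint : IntervalIntegrable (fun t => φ t - ψ t) MeasureTheory.volume s r := by
    rw [intervalIntegrable_iff_integrableOn_Ioc_of_le hsr]
    have hψm : MeasureTheory.AEStronglyMeasurable ψ
        (MeasureTheory.volume.restrict (Set.Ioc s r)) :=
      (hψcont.mono hIocsub).aestronglyMeasurable measurableSet_Ioc
    refine MeasureTheory.Integrable.mono' (g := fun _ => c * r)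
      (MeasureTheory.integrable_const _) (hφmeas.sub hψm) ?_
    refine (MeasureTheory.ae_restrict_iff' measurableSet_Ioc).2 (Filter.Eventually.of_forall ?_)
    intro t ht
    have h1 := hgbound t (hIocsub ht)
    have : c * t ≤ c * r := mul_le_mul_of_nonneg_left (hIocsub ht).2 hc
    simpa using h1.trans this
  have hφint : IntervalIntegrable φ MeasureTheory.volume s r := by
    have := hgint.add hψint
    simpa using this
  -- FTC for log ∘ h
  have hlog : ∫ t in s..r, φ t = Real.log (h r) - Real.log (h s) := by
    refine integral_eq_sub_of_hasDerivAt (f := fun t => Real.log (h t)) (fun t ht => ?_) hφint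
    rw [huIcc] at ht
    exact (hderiv t ht).log (hpos t ht).ne'
  -- FTC for 2 log t
  have h2t : ∫ t in s..r, 2 / t = 2 * Real.log r - 2 * Real.log s := by
    refine integral_eq_sub_of_hasDerivAt (f := fun t => 2 * Real.log t) (fun t ht => ?_) ?_
    · rw [huIcc] at ht
      have := ((Real.hasDerivAt_log (hne0 t ht)).const_mul 2)
      simpa [mul_one_div, div_eq_mul_inv] using this
    · apply ContinuousOn.intervalIntegrable
      rw [huIcc]
      exact continuousOn_const.div continuousOn_id hne0
  -- integrability of n/t and 2/t
  have hntcont : ContinuousOn (fun t => n t / t) (Set.Icc s r) :=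
    hncont.div continuousOn_id hne0
  have hntint : IntervalIntegrable (fun t => n t / t) MeasureTheory.volume s r :=
    (hntcont.mono (by rw [huIcc])).intervalIntegrable
  have h2tint : IntervalIntegrable (fun t => 2 / t) MeasureTheory.volume s r := by
    apply ContinuousOn.intervalIntegrable
    rw [huIcc]
    exact continuousOn_const.div continuousOn_id hne0
  -- rewrite LHS
  have hrrw : Real.log (h r / h s) - 2 * Real.log (r / s) - 2 * (∫ t in s..r, n t / t)
      = ∫ t in s..r, φ t - ψ t := by
    rw [intervalIntegral.integral_sub hφint hψint, hlog]
    have hψsplit : ∀ t ∈ Set.Icc s r, ψ t = 2 / t + 2 * (n t / t) := by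
      intro t ht
      simp only [hψ]
      field_simp
    have : ∫ t in s..r, ψ t = (∫ t in s..r, 2 / t) + ∫ t in s..r, 2 * (n t / t) := by
      rw [← intervalIntegral.integral_add h2tint (hntint.const_mul 2)]
      refine intervalIntegral.integral_congr fun t ht => ?_
      rw [huIcc] at ht
      exact hψsplit t ht
    rw [this, h2t, intervalIntegral.integral_const_mul,
      Real.log_div (hpos r (Set.right_mem_Icc.2 hsr)).ne' (hpos s (Set.left_mem_Icc.2 hsr)).ne',
      Real.log_div (hne0 r (Set.right_mem_Icc.2 hsr)) (hne0 s (Set.left_mem_Icc.2 hsr))]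
    ring
  rw [hrrw]
  -- bound the integral
  have hctint : IntervalIntegrable (fun t => c * t) MeasureTheory.volume s r :=
    (continuous_const.mul continuous_id).intervalIntegrable s r
  have hbnd : |∫ t in s..r, φ t - ψ t| ≤ |∫ t in s..r, c * t| := by
    have := intervalIntegral.norm_integral_le_abs_of_norm_le (f := fun t => φ t - ψ t)
      (g := fun t => c * t) (a := s) (b := r) (μ := MeasureTheory.volume)
      ?_ hctint
    · rw [Real.norm_eq_abs] at this; exact this
    · rw [huIoc]
      refine (MeasureTheory.ae_restrict_iff' measurableSet_Ioc).2 (Filter.Eventually.of_forall ?_)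
      intro t ht
      simpa using hgbound t (hIocsub ht)
  refine hbnd.trans ?_
  rw [intervalIntegral.integral_const_mul, integral_id]
  have hsq : s ^ 2 ≤ r ^ 2 := pow_le_pow_left₀ hs.le hsr 2
  rw [abs_of_nonneg (by nlinarith [sq_nonneg r, sq_nonneg s, mul_le_mul_of_nonneg_left (mul_self_le_mul_self hs.le hsr) hc] : (0:ℝ) ≤ c * ((r ^ 2 - s ^ 2) / 2))]
  ring_nf
  linarith
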